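/- If the LMI condition of the previous statement holds for every w ∈ W (with a common P ≻ 0 and τ > 0), then the ellipsoid Ω = {e ∈ ℝ^n : e^T P e ≤ 1} is a robust positively invariant set for the dynamics e(k+1) = A_cl e(k) + w(k), w(k) ∈ W. -/

import Mathlib

open Matrix

/-- if the LMI certificate holds for every disturbance in `W`,
then the ellipsoid `{e | eᵀ P e ≤ 1}` is robust positively invariant for
`e ↦ A_cl e + w`, `w ∈ W`. -/
theorem lmi_implies_rpi_ellipsoid
    {n : ℕ} (P Acl : Matrix (Fin n) (Fin n) ℝ) (τ : ℝ) (W : Set (Fin n → ℝ))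
    (hP : P.PosDef) (hτ : 0 < τ)
    (hLMI : ∀ w ∈ W, (-(Matrix.fromBlocks
        (Aclᵀ * P * Acl - τ • P)
        (Matrix.of fun i (_ : Unit) => (Aclᵀ * P).mulVec w i)
        (Matrix.of fun (_ : Unit) j => ((Aclᵀ * P).mulVec w) j)
        (Matrix.of fun (_ : Unit) (_ : Unit) => w ⬝ᵥ P.mulVec w + τ - 1))).PosSemidef) :
    ∀ e ∈ {e : Fin n → ℝ | e ⬝ᵥ P.mulVec e ≤ 1}, ∀ w ∈ W,
      Acl.mulVec e + w ∈ {e : Fin n → ℝ | e ⬝ᵥ P.mulVec e ≤ 1} := by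
  intro e he w hw
  simp only [Set.mem_setOf_eq] at he ⊢
  have hPt : Pᵀ = P := by simpa using hP.1.eq
  have hsymm : ∀ x y : Fin n → ℝ, x ⬝ᵥ P.mulVec y = y ⬝ᵥ P.mulVec x := by
    intro x y
    rw [dotProduct_mulVec, ← mulVec_transpose, hPt, dotProduct_comm]
  have key : ∀ z, e ⬝ᵥ Aclᵀ.mulVec z = (Acl.mulVec e) ⬝ᵥ z := by
    intro z; rw [dotProduct_mulVec, vecMul_transpose]
  have h := (hLMI w hw).dotProduct_mulVec_nonneg (Sum.elim e (fun _ => (1:ℝ)))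
  rw [show (star (Sum.elim e (fun _ => (1:ℝ)))) = Sum.elim e (fun _ => (1:ℝ)) from rfl,
    neg_mulVec, dotProduct_neg] at h
  rw [fromBlocks_mulVec, sumElim_dotProduct_sumElim] at h
  simp only [Sum.elim_comp_inl, Sum.elim_comp_inr] at h
  have h1 : ((Matrix.of fun i (_ : Unit) => (Aclᵀ * P).mulVec w i) *ᵥ
      (fun _ : Unit => (1:ℝ))) = (Aclᵀ * P).mulVec w := by
    ext i; simp [mulVec, dotProduct]
  rw [h1] at h
  have h2 : e ⬝ᵥ ((Aclᵀ * P * Acl - τ • P) *ᵥ e + (Aclᵀ * P) *ᵥ w)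
      = (Acl.mulVec e) ⬝ᵥ P.mulVec (Acl.mulVec e) - τ * (e ⬝ᵥ P.mulVec e)
        + (Acl.mulVec e) ⬝ᵥ P.mulVec w := by
    rw [dotProduct_add, sub_mulVec, dotProduct_sub, smul_mulVec,
      dotProduct_smul, smul_eq_mul]
    simp only [Matrix.mul_assoc, ← mulVec_mulVec, key]
  rw [h2] at h
  have h3 : (fun _ : Unit => (1:ℝ)) ⬝ᵥ
      ((Matrix.of fun (_ : Unit) j => ((Aclᵀ * P).mulVec w) j) *ᵥ e
        + (Matrix.of fun (_ : Unit) (_ : Unit) => w ⬝ᵥ P.mulVec w + τ - 1) *ᵥ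
          (fun _ : Unit => (1:ℝ)))
      = (Acl.mulVec e) ⬝ᵥ P.mulVec w + (w ⬝ᵥ P.mulVec w + τ - 1) := by
    have hx : ((Aclᵀ * P) *ᵥ w) ⬝ᵥ e = (Acl *ᵥ e) ⬝ᵥ (P *ᵥ w) := by
      rw [dotProduct_comm, ← mulVec_mulVec, key]
    simp only [dotProduct, mulVec, Pi.add_apply, Matrix.of_apply, Finset.univ_unique,
      Finset.sum_singleton, one_mul, mul_one] at hx ⊢
    linarith [hx]
  rw [h3] at h
  have h4 : (Acl.mulVec e + w) ⬝ᵥ P.mulVec (Acl.mulVec e + w)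
      = (Acl.mulVec e) ⬝ᵥ P.mulVec (Acl.mulVec e) + 2 * ((Acl.mulVec e) ⬝ᵥ P.mulVec w)
        + w ⬝ᵥ P.mulVec w := by
    rw [mulVec_add, dotProduct_add, add_dotProduct, add_dotProduct,
      hsymm w (Acl.mulVec e)]
    ring
  rw [h4]
  nlinarith [h]
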